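/- Let λ*(n) be the symmetric equilibrium precision of the homogeneous estimation game with n agents (the unique fixed point of λ = min{√(F'(1/(nλ))/(n²c'(λ))), 1/σ²}). Then λ*(n) → 0 as n → ∞. -/

import Mathlib

open Set Filter

set_option maxHeartbeats 1000000

/-- the symmetric equilibrium precision `λ*(n)` of the homogeneous estimation
game with `n` agents (the unique fixed point of
`λ = min{√(F'(1/(nλ))/(n²c'(λ))), 1/σ²}`) tends to `0` as `n → ∞`. -/
theorem equilibrium_precision_tendsto_zero
    (σ2 : ℝ) (hσ2 : 0 < σ2) (c F : ℝ → ℝ)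
    (hc_smooth : ContDiffOn ℝ 2 c (Icc 0 (1 / σ2)))
    (hc_nonneg : ∀ x ∈ Icc 0 (1 / σ2), 0 ≤ c x)
    (hc_mono : MonotoneOn c (Icc 0 (1 / σ2)))
    (hc_sconv : StrictConvexOn ℝ (Icc 0 (1 / σ2)) c)
    (hc0 : c 0 = 0) (hc'0 : deriv c 0 = 0)
    (hF_smooth : ContDiffOn ℝ 2 F (Ioi 0))
    (hF_nonneg : ∀ x ∈ Ioi 0, 0 ≤ F x)
    (hF_mono : MonotoneOn F (Ioi 0))
    (hF_sconv : StrictConvexOn ℝ (Ioi 0) F)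
    (lamstar : ℕ → ℝ)
    (hfix : ∀ n : ℕ, 1 ≤ n → lamstar n ∈ Ioc 0 (1 / σ2) ∧
      lamstar n = min (Real.sqrt (deriv F (1 / ((n : ℝ) * lamstar n))
        / ((n : ℝ) ^ 2 * deriv c (lamstar n)))) (1 / σ2)) :
    Tendsto lamstar atTop (nhds 0) := by
  set L := 1 / σ2 with hLdef
  have hL : 0 < L := by positivity
  -- differentiability of F at points of `Ioi 0`
  have hFdiff : ∀ y ∈ Ioi (0:ℝ), DifferentiableAt ℝ F y := fun y hy =>
    ((hF_smooth.differentiableOn two_ne_zero) y hy).differentiableAt (isOpen_Ioi.mem_nhds hy)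
  -- differentiability of c at interior points
  have hcdiff : ∀ x ∈ Ioo (0:ℝ) L, DifferentiableAt ℝ c x := fun x hx =>
    ((hc_smooth.differentiableOn two_ne_zero) x (Ioo_subset_Icc_self hx)).differentiableAt
      (Icc_mem_nhds hx.1 hx.2)
  -- deriv F is nonnegative on Ioi 0
  have hFderiv_nonneg : ∀ y ∈ Ioi (0:ℝ), 0 ≤ deriv F y := by
    intro y hy
    rw [mem_Ioi] at hy
    have h2 : (y/2) ∈ Ioi (0:ℝ) := by rw [mem_Ioi]; linarith
    have hs := hF_sconv.convexOn.slope_le_deriv h2 (mem_Ioi.mpr hy) (by linarith)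
      (hFdiff y (mem_Ioi.mpr hy))
    rw [slope_def_field] at hs
    have hmono := hF_mono h2 (mem_Ioi.mpr hy) (by linarith)
    have : 0 ≤ (F y - F (y/2)) / (y - y/2) := div_nonneg (by linarith) (by linarith)
    linarith
  rw [Metric.tendsto_atTop]
  intro ε hε
  set δ := min ε (L/2) with hδdef
  have hδpos : 0 < δ := lt_min hε (by positivity)
  have hδL : δ < L := lt_of_le_of_lt (min_le_right _ _) (by linarith)
  have hδε : δ ≤ ε := min_le_left _ _
  have hcmem0 : (0:ℝ) ∈ Icc 0 L := ⟨le_rfl, hL.le⟩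
  have hδmem : δ ∈ Icc 0 L := ⟨hδpos.le, hδL.le⟩
  have hhalfmem : δ/2 ∈ Icc 0 L := ⟨by positivity, by linarith⟩
  -- c (δ/2) < c δ / 2
  have key : c (δ/2) < c δ / 2 := by
    have h := hc_sconv.2 hcmem0 hδmem hδpos.ne (by norm_num : (0:ℝ) < 1/2)
      (by norm_num : (0:ℝ) < 1/2) (by norm_num)
    have h2 : (1/2:ℝ) • (0:ℝ) + (1/2:ℝ) • δ = δ/2 := by
      simp [smul_eq_mul]; ring
    rw [h2] at h
    simp only [smul_eq_mul, hc0] at h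
    linarith
  have hchalf : 0 ≤ c (δ/2) := hc_nonneg _ hhalfmem
  have hgap : 0 < c δ - c (δ/2) := by linarith
  set m := (c δ - c (δ/2)) / L with hm
  have hmpos : 0 < m := div_pos hgap hL
  -- lower bound on deriv c on [δ, L)
  have claimA : ∀ x, δ ≤ x → x < L → m ≤ deriv c x := by
    intro x hx1 hx2
    have hxmem : x ∈ Icc 0 L := ⟨le_trans hδpos.le hx1, hx2.le⟩
    have hdx := hcdiff x ⟨lt_of_lt_of_le hδpos hx1, hx2⟩
    have hhx : δ/2 < x := by linarith
    have hslope := hc_sconv.convexOn.slope_le_deriv hhalfmem hxmem hhx hdx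
    rw [slope_def_field] at hslope
    have hnum : c δ - c (δ/2) ≤ c x - c (δ/2) := by
      have := hc_mono hδmem hxmem hx1; linarith
    have hden : 0 < x - δ/2 := by linarith
    have hdenL : x - δ/2 ≤ L := by linarith
    have : m ≤ (c x - c (δ/2)) / (x - δ/2) :=
      div_le_div₀ (by linarith) hnum hden hdenL
    linarith
  -- upper bound on deriv F on (0, 1/δ]
  set b := 1/δ + 2 with hb
  have hbpos : (0:ℝ) < b := by positivity
  set M := F b with hM
  have hMnonneg : 0 ≤ M := hF_nonneg _ (mem_Ioi.mpr hbpos)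
  have claimB : ∀ y, 0 < y → y ≤ 1/δ → deriv F y ≤ M := by
    intro y hy1 hy2
    have hyb : y < b := by rw [hb]; linarith
    have hslope := hF_sconv.convexOn.deriv_le_slope (mem_Ioi.mpr hy1)
      (mem_Ioi.mpr hbpos) hyb (hFdiff y (mem_Ioi.mpr hy1))
    rw [slope_def_field] at hslope
    have hFy : 0 ≤ F y := hF_nonneg y (mem_Ioi.mpr hy1)
    have h1 : (F b - F y)/(b - y) ≤ F b := by
      rw [div_le_iff₀ (by linarith)]
      nlinarith [mul_nonneg hMnonneg (show (0:ℝ) ≤ b - y - 1 by rw [hb]; linarith)]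
    calc deriv F y ≤ (F b - F y)/(b - y) := hslope
      _ ≤ F b := h1
  -- uniform positive lower bound on the relevant derivative of c
  set d := deriv c L with hd
  set m₂ := min m (if 0 < d then d else 1) with hm₂
  have hm₂pos : 0 < m₂ := by
    rw [hm₂]
    apply lt_min hmpos
    split_ifs with h
    · exact h
    · norm_num
  clear_value m₂ d M b m δ L
  obtain ⟨N0, hN0⟩ := exists_nat_gt (M / (δ^2 * m₂))
  refine ⟨max 1 N0, fun n hn => ?_⟩
  have hn1 : 1 ≤ n := le_trans (le_max_left _ _) hn
  have hnN0 : (N0:ℝ) ≤ (n:ℝ) := by exact_mod_cast le_trans (le_max_right _ _) hn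
  have hnR : (1:ℝ) ≤ (n:ℝ) := by exact_mod_cast hn1
  obtain ⟨hmem, heq⟩ := hfix n hn1
  have hlam_pos : 0 < lamstar n := hmem.1
  have hlam_le : lamstar n ≤ L := hmem.2
  rw [Real.dist_eq, sub_zero, abs_of_pos hlam_pos]
  rcases lt_or_ge (lamstar n) δ with hlt | hge
  · linarith
  exfalso
  set lam := lamstar n with hlam
  set X := deriv F (1 / ((n : ℝ) * lam)) / ((n : ℝ) ^ 2 * deriv c lam) with hX
  clear_value X lam
  have hlam_sqrt : lam ≤ Real.sqrt X := heq.le.trans (min_le_left _ _)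
  have hXnonneg : 0 ≤ X := by
    by_contra hXneg
    push_neg at hXneg
    rw [Real.sqrt_eq_zero'.mpr hXneg.le] at hlam_sqrt
    linarith
  have hlam_sq : lam^2 ≤ X := by
    have h := pow_le_pow_left₀ hlam_pos.le hlam_sqrt 2
    rwa [Real.sq_sqrt hXnonneg] at h
  -- bound on the F-derivative term
  have hnlam : 0 < (n:ℝ) * lam := by positivity
  have hypos : 0 < 1 / ((n:ℝ) * lam) := by positivity
  have hyle : 1 / ((n:ℝ) * lam) ≤ 1/δ := by
    apply one_div_le_one_div_of_le hδpos
    nlinarith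
  have hFd_le : deriv F (1 / ((n : ℝ) * lam)) ≤ M := claimB _ hypos hyle
  have hFd_nonneg : 0 ≤ deriv F (1 / ((n : ℝ) * lam)) :=
    hFderiv_nonneg _ (mem_Ioi.mpr hypos)
  -- lower bound on deriv c lam, or direct contradiction
  have hcd : m₂ ≤ deriv c lam := by
    rcases lt_or_eq_of_le hlam_le with hlt | hEq
    · exact le_trans ((le_of_eq hm₂).trans (min_le_left _ _)) (claimA lam hge hlt)
    · by_cases hdpos : 0 < d
      · rw [hEq, ← hd]
        calc m₂ = m ⊓ (if 0 < d then d else 1) := hm₂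
          _ ≤ (if 0 < d then d else 1) := min_le_right _ _
          _ = d := if_pos hdpos
      · exfalso
        push_neg at hdpos
        have hden : (n:ℝ)^2 * deriv c lam ≤ 0 := by
          rw [hEq, ← hd]
          exact mul_nonpos_of_nonneg_of_nonpos (by positivity) hdpos
        have hXle : X ≤ 0 := by
          rw [hX]
          exact div_nonpos_iff.mpr (Or.inl ⟨hFd_nonneg, hden⟩)
        linarith [pow_pos hlam_pos 2]
  -- main contradiction
  have hdenpos : 0 < (n:ℝ)^2 * deriv c lam := by
    apply mul_pos (by positivity)
    linarith
  have hmul : lam^2 * ((n:ℝ)^2 * deriv c lam) ≤ deriv F (1 / ((n : ℝ) * lam)) := by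
    rw [hX] at hlam_sq
    exact (le_div_iff₀ hdenpos).mp hlam_sq
  have hNbig : M < (N0:ℝ) * (δ^2 * m₂) := by
    rw [div_lt_iff₀ (by positivity)] at hN0
    linarith
  have hup : lam ^ 2 * ((n:ℝ)^2 * deriv c lam) ≤ M := le_trans hmul hFd_le
  have h1 : δ^2 * ((n:ℝ)^2 * m₂) ≤ lam^2 * ((n:ℝ)^2 * deriv c lam) :=
    mul_le_mul (pow_le_pow_left₀ hδpos.le hge 2)
      (mul_le_mul_of_nonneg_left hcd (by positivity))
      (mul_nonneg (by positivity) hm₂pos.le) (pow_pos hlam_pos 2).le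
  have hnsq : (N0:ℝ) ≤ (n:ℝ)^2 := by nlinarith
  have h2 : (N0:ℝ) * (δ^2*m₂) ≤ (n:ℝ)^2 * (δ^2*m₂) :=
    mul_le_mul_of_nonneg_right hnsq (mul_nonneg (sq_nonneg δ) hm₂pos.le)
  have h3 : (n:ℝ)^2 * (δ^2*m₂) = δ^2 * ((n:ℝ)^2 * m₂) := by ring
  linarith
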